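/- Let a point process on a finite interval of ℤ be one-dependent: for all finite A, B with dist(A,B) ≥ 2, ρ_{|A|+|B|}(A ∪ B) = ρ_{|A|}(A)·ρ_{|B|}(B). Then the process is determinantal with kernel K(x,y) = 0 for x − y ≥ 2; K(x,y) = −1 for x − y = 1; and K(x,y) = Σ_{r=1}^{y−x+1} (−1)^{r−1} Σ_{x=l_0<l_1<...<l_r=y+1} R_{l_0,l_1}...R_{l_{r−1},l_r} for x ≤ y, where R_{a,b} = ρ_{b−a}(a, a+1, ..., b−1). -/

import Mathlib

open scoped Classical

/-- The kernel of Theorem `rdet`: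
`K(x,y) = 0` for `x − y ≥ 2`, `K(x,y) = −1` for `x − y = 1`, and for `x ≤ y`
`K(x,y) = ∑_{r=1}^{y−x+1} (−1)^{r−1} ∑_{x = l₀ < l₁ < ⋯ < l_r = y+1} R_{l₀,l₁}⋯R_{l_{r−1},l_r}`,
where `R_{a,b} = ρ_{b−a}(a, a+1, …, b−1) = ρ (Finset.Icc a (b−1))`.
(Here the summation index `r` below runs over `0, …, (y−x+1).toNat − 1` and corresponds
to `r+1` in the formula above, so the sign is `(−1)^r` and a chain is a strictly increasing
function `l : Fin (r+2) → ℤ` with `l 0 = x` and `l (last) = y+1`.) -/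
noncomputable def oneDepKernel (ρ : Finset ℤ → ℝ) (x y : ℤ) : ℝ :=
  if 2 ≤ x - y then 0
  else if x - y = 1 then -1
  else ∑ r ∈ Finset.range (y - x + 1).toNat,
    (-1 : ℝ) ^ r *
      ∑ l ∈ (Fintype.piFinset fun _ : Fin (r + 2) => Finset.Icc x (y + 1)).filter
          (fun l => StrictMono l ∧ l 0 = x ∧ l (Fin.last (r + 1)) = y + 1),
        ∏ i : Fin (r + 1), ρ (Finset.Icc (l i.castSucc) (l i.succ - 1))

noncomputable def chainSum (ρ : Finset ℤ → ℝ) (x y : ℤ) (r : ℕ) : ℝ :=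
  ∑ l ∈ (Fintype.piFinset fun _ : Fin (r + 2) => Finset.Icc x (y + 1)).filter
      (fun l => StrictMono l ∧ l 0 = x ∧ l (Fin.last (r + 1)) = y + 1),
    ∏ i : Fin (r + 1), ρ (Finset.Icc (l i.castSucc) (l i.succ - 1))

lemma oneDepKernel_of_le (ρ : Finset ℤ → ℝ) (x y : ℤ) (h : x ≤ y) :
    oneDepKernel ρ x y
      = ∑ r ∈ Finset.range (y - x + 1).toNat, (-1 : ℝ) ^ r * chainSum ρ x y r := by
  rw [oneDepKernel, if_neg (by omega), if_neg (by omega)]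
  rfl

lemma oneDepKernel_of_ge_two (ρ : Finset ℤ → ℝ) (x y : ℤ) (h : 2 ≤ x - y) :
    oneDepKernel ρ x y = 0 := by
  rw [oneDepKernel, if_pos h]

lemma oneDepKernel_of_eq_one (ρ : Finset ℤ → ℝ) (x y : ℤ) (h : x - y = 1) :
    oneDepKernel ρ x y = -1 := by
  rw [oneDepKernel, if_neg (by omega), if_pos h]

lemma strictMono_int_le {m : ℕ} (f : Fin m → ℤ) (hf : StrictMono f) (i j : Fin m)
    (h : i ≤ j) : (j : ℤ) - (i : ℤ) ≤ f j - f i := by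
  obtain ⟨k, hk⟩ := Nat.exists_eq_add_of_le (Fin.le_def.mp h)
  induction k generalizing j with
  | zero =>
      have : i = j := Fin.ext (by omega)
      subst this; simp
  | succ k ih =>
      have hj0 : (0:ℕ) < (j:ℕ) := by omega
      have hlt : (j:ℕ) - 1 < m := by omega
      set j' : Fin m := ⟨(j:ℕ) - 1, hlt⟩ with hj'
      have hj'j : j' < j := by rw [Fin.lt_def]; simp [hj']; omega
      have h1 : f j' + 1 ≤ f j := Int.add_one_le_iff.mpr (hf hj'j)
      have h2 := ih j' (Fin.le_def.mpr (by simp [hj']; omega)) (by simp [hj']; omega)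
      have h3 : ((j' : ℕ) : ℤ) = ((j : ℕ) : ℤ) - 1 := by simp [hj']; omega
      omega

lemma chainSum_zero (ρ : Finset ℤ → ℝ) (x y : ℤ) (h : x ≤ y) :
    chainSum ρ x y 0 = ρ (Finset.Icc x y) := by
  rw [chainSum]
  have hset : ((Fintype.piFinset fun _ : Fin 2 => Finset.Icc x (y + 1)).filter
      (fun l => StrictMono l ∧ l 0 = x ∧ l (Fin.last 1) = y + 1)) = {![x, y + 1]} := by
    ext l
    simp only [Finset.mem_filter, Fintype.mem_piFinset, Finset.mem_singleton,
      Finset.mem_Icc]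
    constructor
    · rintro ⟨-, -, h0, h1⟩
      funext i
      fin_cases i
      · exact h0
      · exact h1
    · rintro rfl
      refine ⟨?_, ?_, rfl, rfl⟩
      · intro i; fin_cases i <;> simp <;> omega
      · intro a b hab
        fin_cases a <;> fin_cases b <;> simp_all <;> omega
  rw [hset, Finset.sum_singleton, Fin.prod_univ_one]
  norm_num

lemma chainSum_vanish (ρ : Finset ℤ → ℝ) (x y : ℤ) (r : ℕ) (h : y - x < (r : ℤ)) :
    chainSum ρ x y r = 0 := by
  rw [chainSum]
  rw [Finset.eq_empty_of_forall_notMem (s := (Fintype.piFinset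
      fun _ : Fin (r + 2) => Finset.Icc x (y + 1)).filter
      (fun l => StrictMono l ∧ l 0 = x ∧ l (Fin.last (r + 1)) = y + 1)) ?_,
    Finset.sum_empty]
  intro l hl
  rw [Finset.mem_filter] at hl
  obtain ⟨-, hmono, h0, hlast⟩ := hl
  have := strictMono_int_le l hmono 0 (Fin.last (r + 1)) (Fin.zero_le _)
  rw [h0, hlast] at this
  simp [Fin.val_last] at this
  omega

lemma chainSum_succ (ρ : Finset ℤ → ℝ) (x y : ℤ) (r : ℕ) :
    chainSum ρ x y (r + 1)
      = ∑ m ∈ Finset.Icc (x + 1) y, ρ (Finset.Icc x (m - 1)) * chainSum ρ m y r := by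
  simp only [chainSum, Finset.mul_sum]
  rw [Finset.sum_sigma' (Finset.Icc (x+1) y)
    (fun m => (Fintype.piFinset fun _ : Fin (r + 2) => Finset.Icc m (y + 1)).filter
      (fun l => StrictMono l ∧ l 0 = m ∧ l (Fin.last (r + 1)) = y + 1))
    (fun m l => ρ (Finset.Icc x (m - 1)) *
      ∏ i : Fin (r + 1), ρ (Finset.Icc (l i.castSucc) (l i.succ - 1)))]
  refine Finset.sum_nbij' (fun l => ⟨l 1, fun i => l i.succ⟩)
    (fun p => Fin.cases x p.2) ?_ ?_ ?_ ?_ ?_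
  · -- hi
    intro l hl
    rw [Finset.mem_filter, Fintype.mem_piFinset] at hl
    obtain ⟨hmem, hmono, h0, hlast⟩ := hl
    have h1lt : (1 : Fin (r + 1 + 2)) < Fin.last (r + 1 + 1) := by
      rw [Fin.lt_def]; simp
    have hl1y : l 1 < y + 1 := by rw [← hlast]; exact hmono h1lt
    have hxl1 : x < l 1 := by
      rw [← h0]; exact hmono (by rw [Fin.lt_def]; simp)
    rw [Finset.mem_sigma, Finset.mem_filter, Fintype.mem_piFinset]
    dsimp only
    refine ⟨Finset.mem_Icc.mpr ⟨by omega, by omega⟩, ?_, ?_, ?_, ?_⟩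
    · intro i
      have h2 := hmem i.succ
      rw [Finset.mem_Icc] at h2 ⊢
      refine ⟨?_, h2.2⟩
      have h1le : (1 : Fin (r + 1 + 2)) ≤ i.succ := by
        rw [Fin.le_def]; simp
      exact hmono.monotone h1le
    · exact fun a b hab => hmono (Fin.succ_lt_succ_iff.mpr hab)
    · rfl
    · rw [Fin.succ_last]; exact hlast
  · -- hj
    rintro ⟨m, l'⟩ hp
    rw [Finset.mem_sigma, Finset.mem_filter, Fintype.mem_piFinset] at hp
    dsimp only at hp ⊢
    obtain ⟨hm, hmem, hmono, h0, hlast⟩ := hp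
    rw [Finset.mem_Icc] at hm
    rw [Finset.mem_filter, Fintype.mem_piFinset]
    refine ⟨?_, ?_, ?_, ?_⟩
    · intro i
      induction i using Fin.cases with
      | zero => rw [Fin.cases_zero, Finset.mem_Icc]; omega
      | succ k =>
          rw [Fin.cases_succ]
          have h2 := hmem k
          have h3 : m ≤ l' k := by rw [← h0]; exact hmono.monotone (Fin.zero_le k)
          rw [Finset.mem_Icc] at h2 ⊢
          constructor <;> omega
    · rw [Fin.strictMono_iff_lt_succ]
      intro i
      induction i using Fin.cases with
      | zero =>
          simp only [Fin.castSucc_zero, Fin.cases_zero, ← Fin.succ_zero_eq_one,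
            Fin.cases_succ, h0]
          omega
      | succ k =>
          rw [← Fin.succ_castSucc, Fin.cases_succ, Fin.cases_succ]
          exact hmono Fin.castSucc_lt_succ
    · rfl
    · simp only [← Fin.succ_last, Fin.cases_succ]
      exact hlast
  · -- left_inv
    intro l hl
    rw [Finset.mem_filter] at hl
    funext i
    induction i using Fin.cases with
    | zero => simp only [Fin.cases_zero]; exact hl.2.2.1.symm
    | succ k => simp only [Fin.cases_succ]
  · -- right_inv
    rintro ⟨m, l'⟩ hp
    rw [Finset.mem_sigma, Finset.mem_filter] at hp
    dsimp only at hp ⊢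
    obtain ⟨-, -, -, h0, -⟩ := hp
    refine Sigma.ext ?_ (heq_of_eq ?_)
    · dsimp only
      simp only [← Fin.succ_zero_eq_one, Fin.cases_succ]
      exact h0
    · funext k
      dsimp only
      simp only [Fin.cases_succ]
  · -- values
    intro l hl
    rw [Finset.mem_filter] at hl
    dsimp only
    rw [Fin.prod_univ_succ, Fin.castSucc_zero, hl.2.2.1, Fin.succ_zero_eq_one]
    congr 1

lemma oneDepKernel_rec (ρ : Finset ℤ → ℝ) (x y : ℤ) (h : x ≤ y) :
    oneDepKernel ρ x y
      = ρ (Finset.Icc x y)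
        - ∑ m ∈ Finset.Icc (x + 1) y, ρ (Finset.Icc x (m - 1)) * oneDepKernel ρ m y := by
  have hM : (y - x + 1).toNat = (y - x).toNat + 1 := by omega
  rw [oneDepKernel_of_le _ _ _ h, hM, Finset.sum_range_succ']
  rw [pow_zero, one_mul, chainSum_zero _ _ _ h]
  have hmain : ∑ r ∈ Finset.range (y - x).toNat, (-1:ℝ)^(r+1) * chainSum ρ x y (r+1)
      = - ∑ m ∈ Finset.Icc (x + 1) y, ρ (Finset.Icc x (m - 1)) * oneDepKernel ρ m y := by
    have h1 : ∀ r ∈ Finset.range (y - x).toNat, (-1:ℝ)^(r+1) * chainSum ρ x y (r+1)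
        = ∑ m ∈ Finset.Icc (x + 1) y,
            -(ρ (Finset.Icc x (m - 1)) * ((-1:ℝ)^r * chainSum ρ m y r)) := by
      intro r _
      rw [chainSum_succ, Finset.mul_sum]
      exact Finset.sum_congr rfl fun m _ => by ring
    rw [Finset.sum_congr rfl h1]
    rw [Finset.sum_comm (s := Finset.range (y - x).toNat) (t := Finset.Icc (x+1) y)
      (f := fun r m => -(ρ (Finset.Icc x (m - 1)) * ((-1:ℝ)^r * chainSum ρ m y r)))]
    simp only [Finset.sum_neg_distrib]
    congr 1
    refine Finset.sum_congr rfl fun m hm => ?_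
    rw [Finset.mem_Icc] at hm
    rw [← Finset.mul_sum]
    congr 1
    rw [oneDepKernel_of_le _ _ _ hm.2]
    symm
    apply Finset.sum_subset
    · intro t ht
      rw [Finset.mem_range] at ht ⊢
      omega
    · intro t _ ht2
      rw [Finset.mem_range, not_lt] at ht2
      rw [chainSum_vanish _ _ _ _ (by omega)]
      ring
  rw [hmain]
  ring

noncomputable def peAux (ρ : Finset ℤ → ℝ) (x : ℤ) (i t : ℕ) : ℝ :=
  if t = i then 1 else if i < t then ρ (Finset.Icc (x + i) (x + t - 1)) else 0

noncomputable def meAux (ρ : Finset ℤ → ℝ) (x : ℤ) (n : ℕ) (i j : ℕ) : ℝ :=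
  if j = n - 1 then ρ (Finset.Icc (x + i) (x + n - 1))
  else if i = j + 1 then -1 else 0

lemma sum_Icc_shift (F : ℤ → ℝ) (x : ℤ) (a b : ℕ) :
    ∑ m ∈ Finset.Icc (x + a) (x + b), F m = ∑ t ∈ Finset.Icc a b, F (x + t) := by
  refine Finset.sum_nbij' (fun m => (m - x).toNat) (fun t => x + t) ?_ ?_ ?_ ?_ ?_
  · intro m hm; rw [Finset.mem_Icc] at hm ⊢; omega
  · intro t ht; rw [Finset.mem_Icc] at ht ⊢; omega
  · intro m hm; rw [Finset.mem_Icc] at hm; omega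
  · intro t ht; rw [Finset.mem_Icc] at ht; omega
  · intro m hm; rw [Finset.mem_Icc] at hm; congr 1; omega

lemma sum_pe_K (ρ : Finset ℤ → ℝ) (x : ℤ) (n i j : ℕ) (hi : i < n) (hj : j < n) :
    ∑ t ∈ Finset.range n, peAux ρ x i t * oneDepKernel ρ (x + t) (x + j)
      = meAux ρ x n i j := by
  rcases le_or_gt i j with hij | hij
  · -- i ≤ j
    have hK := oneDepKernel_rec ρ (x + i) (x + j) (by omega)
    have hswap := sum_Icc_shift
      (fun m => ρ (Finset.Icc (x + i) (m - 1)) * oneDepKernel ρ m (x + j)) x (i + 1) j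
    push_cast at hswap
    rw [show x + ((i : ℤ) + 1) = x + i + 1 by ring] at hswap
    rw [hswap] at hK
    set u := min (j + 1) (n - 1) with hu
    have hsub : Finset.Icc i u ⊆ Finset.range n := by
      intro t ht; rw [Finset.mem_Icc] at ht; rw [Finset.mem_range]; omega
    have hzero : ∀ t ∈ Finset.range n, t ∉ Finset.Icc i u →
        peAux ρ x i t * oneDepKernel ρ (x + t) (x + j) = 0 := by
      intro t ht hnt
      rw [Finset.mem_range] at ht
      rw [Finset.mem_Icc] at hnt
      rcases lt_or_ge t i with h1 | h1
      · rw [peAux, if_neg (by omega), if_neg (by omega), zero_mul]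
      · rw [oneDepKernel_of_ge_two _ _ _ (by omega), mul_zero]
    rw [← Finset.sum_subset hsub hzero]
    have hiu : i ≤ u := by omega
    have hins : Finset.Icc i u = insert i (Finset.Icc (i + 1) u) := by
      ext v; rw [Finset.mem_insert, Finset.mem_Icc, Finset.mem_Icc]; omega
    rw [hins, Finset.sum_insert (by rw [Finset.mem_Icc]; omega)]
    rw [show peAux ρ x i i = 1 by rw [peAux, if_pos rfl], one_mul]
    have hcongr : ∀ t ∈ Finset.Icc (i + 1) u,
        peAux ρ x i t * oneDepKernel ρ (x + t) (x + j)
          = ρ (Finset.Icc (x + i) (x + t - 1)) * oneDepKernel ρ (x + t) (x + j) := by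
      intro t ht; rw [Finset.mem_Icc] at ht
      rw [peAux, if_neg (by omega), if_pos (by omega)]
    rw [Finset.sum_congr rfl hcongr]
    rcases eq_or_lt_of_le (Nat.succ_le_of_lt hj) with hj1 | hj1
    · -- j = n - 1
      have huj : u = j := by omega
      rw [huj, meAux, if_pos (by omega)]
      have hxn : x + (n : ℤ) - 1 = x + j := by omega
      rw [hxn, hK]
      ring
    · -- j + 1 ≤ n - 1
      have huj : u = j + 1 := by omega
      rw [huj, meAux, if_neg (by omega), if_neg (by omega)]
      have hins2 : Finset.Icc (i + 1) (j + 1) = insert (j + 1) (Finset.Icc (i + 1) j) := by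
        ext v; rw [Finset.mem_insert, Finset.mem_Icc, Finset.mem_Icc]; omega
      rw [hins2, Finset.sum_insert (by rw [Finset.mem_Icc]; omega)]
      have hlast : ρ (Finset.Icc (x + i) (x + (j + 1 : ℕ) - 1))
          * oneDepKernel ρ (x + (j + 1 : ℕ)) (x + j) = -ρ (Finset.Icc (x + i) (x + j)) := by
        rw [oneDepKernel_of_eq_one _ _ _ (by push_cast; ring)]
        rw [show x + ((j : ℕ) + 1 : ℕ) - 1 = x + j by push_cast; ring]
        ring
      push_cast at hlast ⊢
      rw [hlast, hK]
      ring
  · -- i > j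
    rcases eq_or_lt_of_le (Nat.succ_le_of_lt hij) with hij1 | hij1
    · -- i = j + 1
      rw [meAux, if_neg (by omega), if_pos hij1.symm]
      rw [Finset.sum_eq_single_of_mem i (Finset.mem_range.mpr hi)]
      · rw [peAux, if_pos rfl, one_mul, oneDepKernel_of_eq_one _ _ _ (by omega)]
      · intro t ht htne
        rcases lt_or_ge t i with h1 | h1
        · rw [peAux, if_neg (by omega), if_neg (by omega), zero_mul]
        · rw [oneDepKernel_of_ge_two _ _ _ (by omega), mul_zero]
    · -- i > j + 1
      rw [meAux, if_neg (by omega), if_neg (by omega)]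
      apply Finset.sum_eq_zero
      intro t ht
      rcases lt_or_ge t i with h1 | h1
      · rw [peAux, if_neg (by omega), if_neg (by omega), zero_mul]
      · rw [oneDepKernel_of_ge_two _ _ _ (by omega), mul_zero]

lemma det_consecutive (ρ : Finset ℤ → ℝ) (n : ℕ) (x : ℤ) (hρ0 : ρ ∅ = 1) :
    Matrix.det (Matrix.of fun i j : Fin n => oneDepKernel ρ (x + i) (x + j))
      = ρ (Finset.Icc x (x + n - 1)) := by
  cases n with
  | zero =>
      rw [Matrix.det_fin_zero, Finset.Icc_eq_empty (by norm_num), hρ0]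
  | succ m =>
      set H := Matrix.of fun i j : Fin (m + 1) => oneDepKernel ρ (x + i) (x + j) with hH
      set P := Matrix.of fun i j : Fin (m + 1) => peAux ρ x i j with hP
      set M := Matrix.of fun i j : Fin (m + 1) => meAux ρ x (m + 1) i j with hM
      have hPH : P * H = M := by
        ext i j
        rw [Matrix.mul_apply]
        calc ∑ k : Fin (m + 1), P i k * H k j
            = ∑ t ∈ Finset.range (m + 1),
                peAux ρ x i t * oneDepKernel ρ (x + t) (x + j) :=
              Fin.sum_univ_eq_sum_range
                (fun t => peAux ρ x i t * oneDepKernel ρ (x + t) (x + j)) (m + 1)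
          _ = meAux ρ x (m + 1) i j := sum_pe_K ρ x (m + 1) i j i.isLt j.isLt
          _ = M i j := rfl
      have hdetP : P.det = 1 := by
        rw [Matrix.det_of_upperTriangular (M := P)]
        · refine Finset.prod_eq_one fun i _ => ?_
          show peAux ρ x i i = 1
          rw [peAux, if_pos rfl]
        · intro i j hji
          have hji' : (j : ℕ) < (i : ℕ) := hji
          show peAux ρ x i j = 0
          rw [peAux, if_neg (by omega), if_neg (by omega)]
      have hdetM : M.det = ρ (Finset.Icc x (x + (m + 1 : ℕ) - 1)) := by
        rw [hM, Matrix.det_succ_row_zero]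
        rw [Fintype.sum_eq_single (Fin.last m)]
        · have hminor : ((Matrix.of fun i j : Fin (m + 1) => meAux ρ x (m + 1) i j).submatrix
              Fin.succ (Fin.last m).succAbove) = Matrix.diagonal (fun _ : Fin m => (-1 : ℝ)) := by
            ext a b
            rw [Matrix.submatrix_apply, Fin.succAbove_last]
            show meAux ρ x (m + 1) (a.succ) (b.castSucc) = _
            rw [meAux, if_neg (by rw [Fin.coe_castSucc]; omega)]
            rcases eq_or_ne a b with rfl | hne
            · rw [if_pos (by rw [Fin.val_succ, Fin.coe_castSucc]), Matrix.diagonal_apply_eq]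
            · rw [if_neg ?_, Matrix.diagonal_apply_ne _ hne]
              rw [Fin.val_succ, Fin.coe_castSucc]
              intro hc
              exact hne (Fin.ext (by omega))
          rw [hminor, Matrix.det_diagonal, Finset.prod_const, Finset.card_univ,
            Fintype.card_fin]
          rw [Matrix.of_apply, meAux, if_pos (by rw [Fin.val_last]; omega)]
          rw [show x + (((0 : Fin (m + 1)) : ℕ) : ℤ) = x by norm_num]
          calc ((-1 : ℝ)) ^ ((Fin.last m : ℕ)) * ρ (Finset.Icc x (x + (m + 1 : ℕ) - 1))
              * (-1 : ℝ) ^ m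
              = ((-1 : ℝ)) ^ (m + m) * ρ (Finset.Icc x (x + (m + 1 : ℕ) - 1)) := by
                rw [Fin.val_last]; ring
            _ = ρ (Finset.Icc x (x + (m + 1 : ℕ) - 1)) := by
                rw [Even.neg_one_pow ⟨m, rfl⟩, one_mul]
        · intro j hj
          have hjne : (j : ℕ) ≠ m := fun hc => hj (Fin.ext (by rw [Fin.val_last]; exact hc))
          rw [Matrix.of_apply, meAux, if_neg (by omega), if_neg (by simp), mul_zero, zero_mul]
      calc H.det = (P * H).det := by rw [Matrix.det_mul, hdetP, one_mul]
        _ = M.det := by rw [hPH]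
        _ = ρ (Finset.Icc x (x + (m + 1 : ℕ) - 1)) := hdetM

lemma main_strictMono (ρ : Finset ℤ → ℝ) (hρ0 : ρ ∅ = 1)
    (honedep : ∀ A B : Finset ℤ, (∀ a ∈ A, ∀ b ∈ B, 2 ≤ |a - b|) →
      ρ (A ∪ B) = ρ A * ρ B) :
    ∀ n (a : Fin n → ℤ), StrictMono a →
      ρ (Finset.image a Finset.univ)
        = Matrix.det (Matrix.of fun i j : Fin n => oneDepKernel ρ (a i) (a j)) := by
  intro n
  induction n using Nat.strong_induction_on with
  | _ n ih =>
    match n, ih with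
    | 0, _ =>
        intro a _
        rw [Matrix.det_fin_zero, Finset.univ_eq_empty, Finset.image_empty, hρ0]
    | m + 1, ih =>
        intro a hmono
        by_cases hcons : ∀ i : Fin (m + 1), a i = a 0 + (i : ℕ)
        · -- consecutive case
          have himg : Finset.image a Finset.univ
              = Finset.Icc (a 0) (a 0 + ((m + 1 : ℕ) : ℤ) - 1) := by
            ext v
            simp only [Finset.mem_image, Finset.mem_univ, true_and, Finset.mem_Icc]
            constructor
            · rintro ⟨i, rfl⟩
              rw [hcons i]
              have := i.isLt
              omega
            · intro hv
              have ht : (v - a 0).toNat < m + 1 := by omega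
              refine ⟨⟨(v - a 0).toNat, ht⟩, ?_⟩
              rw [hcons ⟨(v - a 0).toNat, ht⟩]
              simp only [Fin.val_mk]
              omega
          have hmat : (Matrix.of fun i j : Fin (m + 1) => oneDepKernel ρ (a i) (a j))
              = Matrix.of fun i j : Fin (m + 1) =>
                  oneDepKernel ρ (a 0 + (i : ℕ)) (a 0 + (j : ℕ)) := by
            ext i j
            rw [Matrix.of_apply, Matrix.of_apply, hcons i, hcons j]
          rw [himg, hmat, det_consecutive ρ (m + 1) (a 0) hρ0]
        · -- gap case
          have hgap : ∃ t, ∃ (h : t + 1 < m + 1),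
              2 ≤ a ⟨t + 1, h⟩ - a ⟨t, Nat.lt_of_succ_lt h⟩ := by
            by_contra hno
            push_neg at hno
            apply hcons
            have hstep : ∀ t (h : t < m + 1), a ⟨t, h⟩ = a 0 + (t : ℕ) := by
              intro t
              induction t with
              | zero => intro h; norm_num
              | succ s ihs =>
                  intro h
                  have hs := ihs (Nat.lt_of_succ_lt h)
                  have h1 := hno s h
                  have h2 : a ⟨s, Nat.lt_of_succ_lt h⟩ < a ⟨s + 1, h⟩ :=
                    hmono (by rw [Fin.mk_lt_mk]; omega)
                  have h3 : a ⟨s + 1, h⟩ = a ⟨s, Nat.lt_of_succ_lt h⟩ + 1 := by omega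
                  rw [h3, hs]
                  push_cast
                  ring
            intro i
            have := hstep i.val i.isLt
            rwa [Fin.eta] at this
          obtain ⟨k, hk1, hk2⟩ := hgap
          set n₁ := k + 1 with hn₁
          set n₂ := m - k with hn₂
          have hnn : n₁ + n₂ = m + 1 := by omega
          let e : Fin n₁ ⊕ Fin n₂ ≃ Fin (m + 1) :=
            finSumFinEquiv.trans (finCongr hnn)
          have heval : ∀ s : Fin n₁ ⊕ Fin n₂,
              ((e s : Fin (m + 1)) : ℕ) = Sum.elim (fun p : Fin n₁ => (p : ℕ))
                (fun q : Fin n₂ => n₁ + (q : ℕ)) s := by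
            rintro (p | q) <;> rfl
          set a₁ : Fin n₁ → ℤ := fun p => a (e (Sum.inl p)) with ha₁
          set a₂ : Fin n₂ → ℤ := fun q => a (e (Sum.inr q)) with ha₂
          have hbound1 : ∀ p : Fin n₁, a₁ p ≤ a ⟨k, by omega⟩ := by
            intro p
            apply hmono.monotone
            rw [Fin.le_def, heval]
            exact Nat.lt_succ_iff.mp p.isLt
          have hbound2 : ∀ q : Fin n₂, a ⟨k + 1, hk1⟩ ≤ a₂ q := by
            intro q
            apply hmono.monotone
            rw [Fin.le_def, heval]
            simp only [Sum.elim_inr]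
            omega
          have hsep : ∀ p q, a₂ q - a₁ p ≥ 2 := by
            intro p q
            have := hbound1 p
            have := hbound2 q
            omega
          have himg : Finset.image a Finset.univ
              = Finset.image a₁ Finset.univ ∪ Finset.image a₂ Finset.univ := by
            ext v
            simp only [Finset.mem_image, Finset.mem_univ, true_and, Finset.mem_union]
            constructor
            · rintro ⟨i, rfl⟩
              rcases hs : e.symm i with p | q
              · left; exact ⟨p, by rw [ha₁]; simp only [← hs, Equiv.apply_symm_apply]⟩
              · right; exact ⟨q, by rw [ha₂]; simp only [← hs, Equiv.apply_symm_apply]⟩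
            · rintro (⟨p, rfl⟩ | ⟨q, rfl⟩)
              · exact ⟨e (Sum.inl p), rfl⟩
              · exact ⟨e (Sum.inr q), rfl⟩
          have hρmul : ρ (Finset.image a₁ Finset.univ ∪ Finset.image a₂ Finset.univ)
              = ρ (Finset.image a₁ Finset.univ) * ρ (Finset.image a₂ Finset.univ) := by
            apply honedep
            intro u hu v hv
            simp only [Finset.mem_image, Finset.mem_univ, true_and] at hu hv
            obtain ⟨p, rfl⟩ := hu
            obtain ⟨q, rfl⟩ := hv
            have := hsep p q
            rw [abs_sub_comm]
            calc (2 : ℤ) ≤ a₂ q - a₁ p := this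
              _ ≤ |a₂ q - a₁ p| := le_abs_self _
          have hmono1 : StrictMono a₁ := by
            intro p p' hp
            apply hmono
            rw [Fin.lt_def, heval, heval]
            exact hp
          have hmono2 : StrictMono a₂ := by
            intro q q' hq
            apply hmono
            rw [Fin.lt_def, heval, heval]
            simp only [Sum.elim_inr]
            omega
          have hdet : Matrix.det (Matrix.of fun i j : Fin (m + 1) =>
                oneDepKernel ρ (a i) (a j))
              = Matrix.det (Matrix.of fun p p' : Fin n₁ => oneDepKernel ρ (a₁ p) (a₁ p'))
                * Matrix.det (Matrix.of fun q q' : Fin n₂ =>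
                    oneDepKernel ρ (a₂ q) (a₂ q')) := by
            rw [← Matrix.det_submatrix_equiv_self e
              (Matrix.of fun i j : Fin (m + 1) => oneDepKernel ρ (a i) (a j))]
            have hblocks : (Matrix.of fun i j : Fin (m + 1) =>
                  oneDepKernel ρ (a i) (a j)).submatrix e e
                = Matrix.fromBlocks
                    (Matrix.of fun p p' : Fin n₁ => oneDepKernel ρ (a₁ p) (a₁ p'))
                    (Matrix.of fun p q' => oneDepKernel ρ (a₁ p) (a₂ q'))
                    0
                    (Matrix.of fun q q' : Fin n₂ => oneDepKernel ρ (a₂ q) (a₂ q')) := by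
              ext (p | q) (p' | q') <;>
                simp only [Matrix.submatrix_apply, Matrix.fromBlocks_apply₁₁,
                  Matrix.fromBlocks_apply₁₂, Matrix.fromBlocks_apply₂₁,
                  Matrix.fromBlocks_apply₂₂, Matrix.of_apply, Matrix.zero_apply]
              · rfl
              · rfl
              · exact oneDepKernel_of_ge_two ρ _ _ (hsep _ _)
              · rfl
            rw [hblocks, Matrix.det_fromBlocks_zero₂₁]
          rw [himg, hρmul, hdet,
            ih n₁ (by omega) a₁ hmono1, ih n₂ (by omega) a₂ hmono2]

/-- a one-dependent point process on a finite segment `[lo, hi]` of `ℤ`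
is determinantal with the explicit kernel `oneDepKernel ρ`.  Here `p` is the probability
measure on configurations (subsets of the segment), `ρ A = Pr{A ⊆ config}` are its
correlation functions, and one-dependence means `ρ(A ∪ B) = ρ(A)·ρ(B)` whenever
`dist(A,B) ≥ 2`. -/
theorem oneDependent_determinantal (lo hi : ℤ) (p : Finset ℤ → ℝ)
    (hp0 : ∀ S, 0 ≤ p S) (hp1 : ∑ S ∈ (Finset.Icc lo hi).powerset, p S = 1)
    (hsupp : ∀ S : Finset ℤ, p S ≠ 0 → S ⊆ Finset.Icc lo hi)
    (ρ : Finset ℤ → ℝ)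
    (hρ : ∀ A, ρ A = ∑ S ∈ (Finset.Icc lo hi).powerset.filter (fun S => A ⊆ S), p S)
    (honedep : ∀ A B : Finset ℤ, (∀ a ∈ A, ∀ b ∈ B, 2 ≤ |a - b|) →
      ρ (A ∪ B) = ρ A * ρ B)
    (n : ℕ) (a : Fin n → ℤ) (ha : Function.Injective a)
    (haseg : ∀ i, a i ∈ Finset.Icc lo hi) :
    ρ (Finset.image a Finset.univ)
      = Matrix.det (Matrix.of fun i j : Fin n => oneDepKernel ρ (a i) (a j)) := by
  have hρ0 : ρ ∅ = 1 := by
    rw [hρ ∅, ← hp1]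
    congr 1
    exact Finset.filter_true_of_mem fun S _ => Finset.empty_subset S
  set σ := Tuple.sort a with hσ
  have hsm : StrictMono (a ∘ σ) :=
    (Tuple.monotone_sort a).strictMono_of_injective (ha.comp σ.injective)
  have himg : Finset.image (a ∘ σ) Finset.univ = Finset.image a Finset.univ := by
    ext v
    simp only [Finset.mem_image, Finset.mem_univ, true_and, Function.comp_apply]
    constructor
    · rintro ⟨i, rfl⟩; exact ⟨σ i, rfl⟩
    · rintro ⟨i, rfl⟩; exact ⟨σ.symm i, by rw [Equiv.apply_symm_apply]⟩
  have hdet : Matrix.det (Matrix.of fun i j : Fin n => oneDepKernel ρ (a (σ i)) (a (σ j)))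
      = Matrix.det (Matrix.of fun i j : Fin n => oneDepKernel ρ (a i) (a j)) := by
    have hre : (Matrix.of fun i j : Fin n => oneDepKernel ρ (a (σ i)) (a (σ j)))
        = (Matrix.of fun i j : Fin n => oneDepKernel ρ (a i) (a j)).submatrix σ σ := rfl
    rw [hre, Matrix.det_submatrix_equiv_self]
  rw [← himg, ← hdet]
  exact main_strictMono ρ hρ0 honedep n (a ∘ σ) hsm
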